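/- Let F : ℝ^n → ℝ be convex (hence continuous), let λ > 0, and let (x_t)_{t ∈ ℕ} be any sequence in ℝ^n satisfying x_{t+1} = x_t − λ p_t for some vectors p_t ∈ ℝ^n. Define the approximation errors ε_t = ‖p_t − (1/λ)(x_t − prox_{λF}(x_t))‖. If the sequence (x_t)_t is bounded and Σ_{t=0}^∞ ε_t < ∞, then lim_{t→∞} F(x_t) = inf_{x ∈ ℝ^n} F(x). -/

import Mathlib

open Filter Metric

lemma prox_subgrad {n : ℕ} {F : EuclideanSpace ℝ (Fin n) → ℝ}
    (hconv : ConvexOn ℝ Set.univ F) {lam : ℝ} (hlam : 0 < lam)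
    (x m : EuclideanSpace ℝ (Fin n))
    (hmin : IsMinOn (fun u => lam * F u + 1 / 2 * ‖u - x‖ ^ 2) Set.univ m)
    (u : EuclideanSpace ℝ (Fin n)) :
    (inner ℝ (x - m) (u - m) : ℝ) ≤ lam * (F u - F m) := by
  have key : ∀ t : ℝ, 0 < t → t ≤ 1 →
      (inner ℝ (x - m) (u - m) : ℝ) ≤ lam * (F u - F m) + t / 2 * ‖u - m‖ ^ 2 := by
    intro t ht ht1
    have hcv : F ((1 - t) • m + t • u) ≤ (1 - t) * F m + t * F u :=
      hconv.2 (Set.mem_univ m) (Set.mem_univ u) (by linarith) ht.le (by ring)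
    have hpt := isMinOn_iff.1 hmin ((1 - t) • m + t • u) (Set.mem_univ _)
    have hid : (1 - t) • m + t • u - x = (m - x) + t • (u - m) := by
      module
    have hexp : ‖(1 - t) • m + t • u - x‖ ^ 2
        = ‖m - x‖ ^ 2 + 2 * (t * (inner ℝ (m - x) (u - m) : ℝ)) + t ^ 2 * ‖u - m‖ ^ 2 := by
      rw [hid, norm_add_sq_real, real_inner_smul_right, norm_smul, Real.norm_eq_abs,
        abs_of_pos ht]
      ring
    have hinner : (inner ℝ (m - x) (u - m) : ℝ) = -(inner ℝ (x - m) (u - m) : ℝ) := by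
      rw [← inner_neg_left, neg_sub]
    rw [hexp, hinner] at hpt
    have h2 : lam * F ((1 - t) • m + t • u) ≤ lam * ((1 - t) * F m + t * F u) :=
      mul_le_mul_of_nonneg_left hcv hlam.le
    have h3 : t * (inner ℝ (x - m) (u - m) : ℝ)
        ≤ t * (lam * (F u - F m) + t / 2 * ‖u - m‖ ^ 2) := by nlinarith [hpt, h2]
    exact le_of_mul_le_mul_left h3 ht
  refine le_of_forall_pos_le_add fun ε hε => ?_
  rcases le_or_gt (‖u - m‖ ^ 2) 0 with h | h
  · have := key 1 one_pos le_rfl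
    nlinarith
  · have ht : 0 < min 1 (2 * ε / ‖u - m‖ ^ 2) := lt_min one_pos (by positivity)
    have hk := key _ ht (min_le_left _ _)
    have h2 : min 1 (2 * ε / ‖u - m‖ ^ 2) ≤ 2 * ε / ‖u - m‖ ^ 2 := min_le_right _ _
    have h3 := (le_div_iff₀ h).1 h2
    linarith

lemma prox_contract {n : ℕ} {F : EuclideanSpace ℝ (Fin n) → ℝ}
    (hconv : ConvexOn ℝ Set.univ F) {lam : ℝ} (hlam : 0 < lam)
    (x m : EuclideanSpace ℝ (Fin n))
    (hmin : IsMinOn (fun u => lam * F u + 1 / 2 * ‖u - x‖ ^ 2) Set.univ m)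
    (y : EuclideanSpace ℝ (Fin n)) :
    ‖m - y‖ ^ 2 ≤ ‖x - y‖ ^ 2 - ‖x - m‖ ^ 2 + 2 * lam * (F y - F m) := by
  have h := prox_subgrad hconv hlam x m hmin y
  have hid : ‖m - y‖ ^ 2 = ‖x - y‖ ^ 2 - 2 * (inner ℝ (x - y) (x - m) : ℝ) + ‖x - m‖ ^ 2 := by
    have h0 : m - y = (x - y) - (x - m) := by abel
    rw [h0, norm_sub_sq_real]
  have h2 : (inner ℝ (x - m) (y - m) : ℝ)
      = ‖x - m‖ ^ 2 - (inner ℝ (x - m) (x - y) : ℝ) := by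
    have h0 : y - m = (x - m) - (x - y) := by abel
    rw [h0, inner_sub_right, real_inner_self_eq_norm_sq]
  have h4 : (inner ℝ (x - y) (x - m) : ℝ) = (inner ℝ (x - m) (x - y) : ℝ) := real_inner_comm _ _
  linarith

set_option maxHeartbeats 1000000 in
/-- Convergence of the approximate proximal point method with summable errors
(Rockafellar): if the iterates are bounded and the approximation errors are
summable, the objective values converge to the infimum. -/
theorem approx_prox_point_convergence {n : ℕ}
    (F : EuclideanSpace ℝ (Fin n) → ℝ)
    (hconv : ConvexOn ℝ Set.univ F)
    (lam : ℝ) (hlam : 0 < lam)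
    (prox : EuclideanSpace ℝ (Fin n) → EuclideanSpace ℝ (Fin n))
    (hprox : ∀ y, IsMinOn (fun u => lam * F u + 1 / 2 * ‖u - y‖ ^ 2) Set.univ (prox y))
    (x p : ℕ → EuclideanSpace ℝ (Fin n))
    (hx : ∀ t, x (t + 1) = x t - lam • p t)
    (hbdd : Bornology.IsBounded (Set.range x))
    (herr : Summable fun t => ‖p t - (1 / lam) • (x t - prox (x t))‖) :
    Tendsto (fun t => F (x t)) atTop (nhds (⨅ y, F y)) := by
  set ε : ℕ → ℝ := fun t => ‖p t - (1 / lam) • (x t - prox (x t))‖ with hεdef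
  have hεnn : ∀ t, 0 ≤ ε t := fun t => norm_nonneg _
  set S : ℝ := ∑' t, ε t with hSdef
  have hSnn : 0 ≤ S := tsum_nonneg hεnn
  have hεle : ∀ t, ε t ≤ S := fun t => Summable.le_tsum herr t fun j _ => hεnn j
  have hεtend : Tendsto ε atTop (nhds 0) := herr.tendsto_atTop_zero
  -- step identity
  have hstep : ∀ t, x (t + 1)
      = prox (x t) - lam • (p t - (1 / lam) • (x t - prox (x t))) := by
    intro t
    rw [hx t, smul_sub, smul_smul, mul_one_div_cancel hlam.ne', one_smul]
    abel
  have hdist : ∀ t, ‖x (t + 1) - prox (x t)‖ = lam * ε t := by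
    intro t
    have h0 : x (t + 1) - prox (x t)
        = -(lam • (p t - (1 / lam) • (x t - prox (x t)))) := by rw [hstep]; abel
    rw [h0, norm_neg, norm_smul, Real.norm_eq_abs, abs_of_pos hlam]
  -- bounds
  obtain ⟨R, hR⟩ := isBounded_iff_forall_norm_le.1 hbdd
  have hRx : ∀ t, ‖x t‖ ≤ R := fun t => hR _ ⟨t, rfl⟩
  have hR0 : (0 : ℝ) ≤ R := (norm_nonneg _).trans (hRx 0)
  set R2 : ℝ := R + lam * S with hR2def
  have hRR2 : R ≤ R2 := by nlinarith
  have hR20 : (0 : ℝ) ≤ R2 := hR0.trans hRR2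
  have hRp : ∀ t, ‖prox (x t)‖ ≤ R2 := by
    intro t
    have h0 : prox (x t) = x (t + 1) + lam • (p t - (1 / lam) • (x t - prox (x t))) := by
      rw [hstep]; abel
    have h1 := norm_add_le (x (t + 1)) (lam • (p t - (1 / lam) • (x t - prox (x t))))
    rw [← h0] at h1
    rw [norm_smul, Real.norm_eq_abs, abs_of_pos hlam] at h1
    have h2 := hεle t
    have h3 := hRx (t + 1)
    nlinarith
  -- continuity and Lipschitz bound
  have hcont : Continuous F := by
    have h := hconv.continuousOn isOpen_univ
    exact continuousOn_univ.1 h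
  have hconv' : ConvexOn ℝ (ball (0 : EuclideanSpace ℝ (Fin n)) (R2 + 2)) F :=
    hconv.subset (Set.subset_univ _) (convex_ball _ _)
  have hbddim : Bornology.IsBounded (F '' ball (0 : EuclideanSpace ℝ (Fin n)) (R2 + 2)) :=
    (((isCompact_closedBall (0 : EuclideanSpace ℝ (Fin n)) (R2 + 2)).image hcont).isBounded).subset
      (Set.image_mono ball_subset_closedBall)
  obtain ⟨K, hK⟩ := hconv'.exists_lipschitzOnWith_of_isBounded
    (show R2 + 1 < R2 + 2 by linarith) hbddim
  set C1 : ℝ := (K : ℝ) * lam with hC1def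
  have hC1nn : 0 ≤ C1 := mul_nonneg K.coe_nonneg hlam.le
  have hmemx : ∀ t, x t ∈ ball (0 : EuclideanSpace ℝ (Fin n)) (R2 + 1) := by
    intro t; rw [mem_ball_zero_iff]; have := hRx t; linarith
  have hmemp : ∀ t, prox (x t) ∈ ball (0 : EuclideanSpace ℝ (Fin n)) (R2 + 1) := by
    intro t; rw [mem_ball_zero_iff]; have := hRp t; linarith
  have hFd : ∀ t, |F (x (t + 1)) - F (prox (x t))| ≤ C1 * ε t := by
    intro t
    have h := hK.dist_le_mul _ (hmemx (t + 1)) _ (hmemp t)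
    rw [Real.dist_eq, dist_eq_norm, hdist t] at h
    calc |F (x (t + 1)) - F (prox (x t))| ≤ K * (lam * ε t) := h
      _ = C1 * ε t := by rw [hC1def]; ring
  -- descent
  have hdesc : ∀ t, F (prox (x t)) ≤ F (x t) := by
    intro t
    have h := prox_subgrad hconv hlam (x t) (prox (x t)) (hprox (x t)) (x t)
    have h2 : (inner ℝ (x t - prox (x t)) (x t - prox (x t)) : ℝ)
        = ‖x t - prox (x t)‖ ^ 2 := real_inner_self_eq_norm_sq _
    nlinarith [sq_nonneg ‖x t - prox (x t)‖]
  have hqd : ∀ t, F (x (t + 1)) ≤ F (x t) + C1 * ε t := by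
    intro t
    have h := (abs_le.1 (hFd t)).2
    linarith [hdesc t]
  -- lower bound on the ball
  obtain ⟨z, hz, hzmin⟩ := (isCompact_closedBall (0 : EuclideanSpace ℝ (Fin n)) R2).exists_isMinOn
    (nonempty_closedBall.2 hR20) hcont.continuousOn
  have hμ : ∀ t, F z ≤ F (x t) := by
    intro t
    exact isMinOn_iff.1 hzmin (x t) (by rw [mem_closedBall_zero_iff]; exact (hRx t).trans hRR2)
  -- tail sums and quasi-monotone limit
  set τ : ℕ → ℝ := fun i => ∑' k, ε (k + i) with hτdef
  have hτsummable : ∀ t, Summable fun s => ε (s + t) := fun t => (summable_nat_add_iff t).2 herr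
  have hτnn : ∀ t, 0 ≤ τ t := fun t => tsum_nonneg fun s => hεnn _
  have htail : ∀ t, τ t = ε t + τ (t + 1) := by
    intro t
    rw [hτdef]
    simp only
    rw [Summable.tsum_eq_zero_add (hτsummable t)]
    simp only [zero_add]
    congr 1
    apply tsum_congr
    intro b
    congr 1
    omega
  set G : ℕ → ℝ := fun t => F (x t) + C1 * τ t with hGdef
  have hGanti : Antitone G := by
    apply antitone_nat_of_succ_le
    intro t
    have h2 : C1 * τ t = C1 * ε t + C1 * τ (t + 1) := by rw [htail t, mul_add]
    have h3 := hqd t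
    simp only [hGdef]
    linarith
  have hGbdd : BddBelow (Set.range G) := by
    refine ⟨F z, ?_⟩
    rintro _ ⟨t, rfl⟩
    have h1 := hμ t
    have h2 := mul_nonneg hC1nn (hτnn t)
    simp only [hGdef]
    linarith
  have hGtend : Tendsto G atTop (nhds (⨅ t, G t)) := tendsto_atTop_ciInf hGanti hGbdd
  set l : ℝ := ⨅ t, G t with hldef
  have hFl : Tendsto (fun t => F (x t)) atTop (nhds l) := by
    have hτ0 : Tendsto τ atTop (nhds 0) := tendsto_sum_nat_add ε
    have h := hGtend.sub (hτ0.const_mul C1)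
    simp only [mul_zero, sub_zero] at h
    have heq : (fun t => F (x t)) = fun t => G t - C1 * τ t := by
      funext t; simp only [hGdef]; ring
    rw [heq]
    exact h
  -- F (prox (x t)) also tends to l
  have hFl1 : Tendsto (fun t => F (x (t + 1))) atTop (nhds l) :=
    hFl.comp (tendsto_add_atTop_nat 1)
  have hd0 : Tendsto (fun t => F (x (t + 1)) - F (prox (x t))) atTop (nhds 0) := by
    have h := hεtend.const_mul C1
    rw [mul_zero] at h
    refine squeeze_zero_norm (fun t => ?_) h
    rw [Real.norm_eq_abs]
    exact hFd t
  have hproxtend : Tendsto (fun t => F (prox (x t))) atTop (nhds l) := by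
    have h := hFl1.sub hd0
    simpa [sub_sub_cancel] using h
  -- l is a lower bound of F
  have hkey : ∀ y, l ≤ F y := by
    intro y
    by_contra hlt
    push_neg at hlt
    set δ : ℝ := (l - F y) / 2 with hδdef
    have hδpos : 0 < δ := by simp only [hδdef]; linarith
    have hev : ∀ᶠ t in atTop, F y + δ ≤ F (prox (x t)) := by
      have h := (tendsto_order.1 hproxtend).1 (F y + δ) (by simp only [hδdef]; linarith)
      filter_upwards [h] with t ht using ht.le
    obtain ⟨t₀, ht₀⟩ := eventually_atTop.1 hev
    set a : ℕ → ℝ := fun t => ‖x t - y‖ ^ 2 with hadef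
    set C2 : ℝ := lam * (2 * (R2 + ‖y‖) + lam * S) with hC2def
    have hC2nn : 0 ≤ C2 := by
      have : (0:ℝ) ≤ R2 + ‖y‖ := by positivity
      nlinarith
    have hrec : ∀ t, t₀ ≤ t → a (t + 1) ≤ a t - 2 * lam * δ + C2 * ε t := by
      intro t ht
      have hcon := prox_contract hconv hlam (x t) (prox (x t)) (hprox (x t)) y
      have hδt : F y - F (prox (x t)) ≤ -δ := by linarith [ht₀ t ht]
      have hb1 : ‖prox (x t) - y‖ ^ 2 ≤ a t - 2 * lam * δ := by
        have h5 : 2 * lam * (F y - F (prox (x t))) ≤ 2 * lam * (-δ) :=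
          mul_le_mul_of_nonneg_left hδt (by positivity)
        have h6 : (0:ℝ) ≤ ‖x t - prox (x t)‖ ^ 2 := sq_nonneg _
        simp only [hadef]
        nlinarith
      have htri : ‖x (t + 1) - y‖ ≤ ‖prox (x t) - y‖ + lam * ε t := by
        have h0 : x (t + 1) - y = (prox (x t) - y) + (x (t + 1) - prox (x t)) := by abel
        calc ‖x (t + 1) - y‖ ≤ ‖prox (x t) - y‖ + ‖x (t + 1) - prox (x t)‖ := by
              rw [h0]; exact norm_add_le _ _
          _ = ‖prox (x t) - y‖ + lam * ε t := by rw [hdist t]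
      have hsq : ‖x (t + 1) - y‖ ^ 2 ≤ (‖prox (x t) - y‖ + lam * ε t) ^ 2 :=
        pow_le_pow_left₀ (norm_nonneg _) htri 2
      have hby : ‖prox (x t) - y‖ ≤ R2 + ‖y‖ :=
        (norm_sub_le _ _).trans (by linarith [hRp t])
      have h5 : lam * ε t * ‖prox (x t) - y‖ ≤ lam * ε t * (R2 + ‖y‖) :=
        mul_le_mul_of_nonneg_left hby (by positivity)
      have h6 : (lam * ε t) * (lam * ε t) ≤ (lam * ε t) * (lam * S) :=
        mul_le_mul_of_nonneg_left (by nlinarith [hεle t]) (by positivity)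
      simp only [hadef, hC2def]
      nlinarith [hsq, hb1, h5, h6]
    have hind : ∀ N : ℕ, a (t₀ + N) + 2 * lam * δ * N
        ≤ a t₀ + C2 * ∑ s ∈ Finset.range N, ε (s + t₀) := by
      intro N
      induction N with
      | zero => simp
      | succ N ih =>
        have h := hrec (t₀ + N) (Nat.le_add_right _ _)
        rw [Finset.sum_range_succ]
        have hc : ε (t₀ + N) = ε (N + t₀) := by rw [Nat.add_comm]
        rw [hc] at h
        push_cast
        have hmul : C2 * (∑ s ∈ Finset.range N, ε (s + t₀) + ε (N + t₀))
            = C2 * ∑ s ∈ Finset.range N, ε (s + t₀) + C2 * ε (N + t₀) := by ring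
        rw [hmul]
        have hidx : t₀ + (N + 1) = (t₀ + N) + 1 := by omega
        rw [hidx]
        push_cast at ih
        linarith
    obtain ⟨N, hN⟩ := exists_nat_gt ((a t₀ + C2 * S) / (2 * lam * δ))
    have hpos : (0:ℝ) < 2 * lam * δ := by positivity
    have h1 := hind N
    have h2 : ∑ s ∈ Finset.range N, ε (s + t₀) ≤ S := by
      have h3 : ∑ s ∈ Finset.range N, ε (s + t₀) ≤ τ t₀ :=
        Summable.sum_le_tsum _ (fun i _ => hεnn _) (hτsummable t₀)
      have h5 := Summable.sum_add_tsum_nat_add (f := ε) t₀ herr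
      have h6 : (0:ℝ) ≤ ∑ i ∈ Finset.range t₀, ε i := Finset.sum_nonneg fun i _ => hεnn i
      have h7 : τ t₀ ≤ S := by rw [hSdef]; rw [hτdef]; simp only; linarith [h5]
      linarith
    have h7 : a t₀ + C2 * S < N * (2 * lam * δ) := by rwa [div_lt_iff₀ hpos] at hN
    have h8 : 0 ≤ a (t₀ + N) := by simp only [hadef]; positivity
    nlinarith [mul_le_mul_of_nonneg_left h2 hC2nn]
  -- conclude
  have hbddF : BddBelow (Set.range F) := ⟨l, by rintro _ ⟨y, rfl⟩; exact hkey y⟩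
  have hle : l ≤ ⨅ y, F y := le_ciInf hkey
  have hge : (⨅ y, F y) ≤ l :=
    ge_of_tendsto hFl (Eventually.of_forall fun t => ciInf_le hbddF (x t))
  have heq : (⨅ y, F y) = l := le_antisymm hge hle
  rw [heq]
  exact hFl
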